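/- arXiv:1507.00131 — 2 statements merged into one kernel-verified Lean document; each statement's English description precedes it below -/
import Mathlib

section
/- Let η² > 0 and let η*² ≥ η² be reals. Then ∫₀^∞ 4r·η²·log(r² + η*²)/(r² + η²)² dr ≤ 2·log(η*²) + 2. -/
open MeasureTheory Set Filter Real Topology

theorem stmt_6 (η2 ηs2 : ℝ) (hη2 : 0 < η2) (h : η2 ≤ ηs2) :
    ∫ r in Set.Ioi (0 : ℝ), 4 * r * η2 * Real.log (r ^ 2 + ηs2) / (r ^ 2 + η2) ^ 2
      ≤ 2 * Real.log ηs2 + 2 := by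
  have hηs2 : 0 < ηs2 := lt_of_lt_of_le hη2 h
  have hpos : ∀ r : ℝ, 0 < r ^ 2 + η2 := fun r => by positivity
  have hpos' : ∀ r : ℝ, 0 < r ^ 2 + ηs2 := fun r => by positivity
  -- derivative of the inner function
  have hd : ∀ r : ℝ, HasDerivAt (fun r : ℝ => r ^ 2 + η2) (2 * r) r := fun r => by
    simpa using (hasDerivAt_pow 2 r).add_const η2
  -- antiderivative for the basic integrand b r = 4 r η2 / (r²+η2)²
  have hp : ∀ r : ℝ, HasDerivAt (fun r : ℝ => -2 * η2 / (r ^ 2 + η2))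
      (4 * r * η2 / (r ^ 2 + η2) ^ 2) r := by
    intro r
    have := (hasDerivAt_const r (-2 * η2)).div (hd r) (hpos r).ne'
    simp only [Pi.div_def] at this
    refine this.congr_deriv ?_
    field_simp
    ring
  -- antiderivative for h₂ r = 4 r η2 (log(r²+η2) - log η2) / (r²+η2)²
  have hq : ∀ r : ℝ, HasDerivAt
      (fun r : ℝ => -2 * η2 * (Real.log (r ^ 2 + η2) - Real.log η2 + 1) / (r ^ 2 + η2))
      (4 * r * η2 * (Real.log (r ^ 2 + η2) - Real.log η2) / (r ^ 2 + η2) ^ 2) r := by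
    intro r
    have hlog : HasDerivAt (fun r : ℝ => Real.log (r ^ 2 + η2)) (2 * r / (r ^ 2 + η2)) r :=
      (hd r).log (hpos r).ne'
    have hnum : HasDerivAt
        (fun r : ℝ => -2 * η2 * (Real.log (r ^ 2 + η2) - Real.log η2 + 1))
        (-2 * η2 * (2 * r / (r ^ 2 + η2))) r :=
      ((hlog.sub_const (Real.log η2)).add_const 1).const_mul (-2 * η2)
    have := hnum.div (hd r) (hpos r).ne'
    simp only [Pi.div_def] at this
    refine this.congr_deriv ?_
    field_simp
    ring
  -- limits at infinity
  have hs_top : Tendsto (fun r : ℝ => r ^ 2 + η2) atTop atTop :=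
    tendsto_atTop_add_const_right atTop η2 (tendsto_pow_atTop two_ne_zero)
  have hp_lim : Tendsto (fun r : ℝ => -2 * η2 / (r ^ 2 + η2)) atTop (𝓝 0) :=
    tendsto_const_nhds.div_atTop hs_top
  have hq_lim : Tendsto
      (fun r : ℝ => -2 * η2 * (Real.log (r ^ 2 + η2) - Real.log η2 + 1) / (r ^ 2 + η2))
      atTop (𝓝 0) := by
    have h2 : Tendsto (fun x : ℝ => Real.log x / x + (1 - Real.log η2) / x) atTop (𝓝 (0 + 0)) :=
      (Real.isLittleO_log_id_atTop.tendsto_div_nhds_zero).add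
        (tendsto_const_nhds.div_atTop tendsto_id)
    have h3 : Tendsto (fun x : ℝ => (Real.log x - Real.log η2 + 1) / x) atTop (𝓝 0) := by
      have h2' : Tendsto (fun x : ℝ => Real.log x / x + (1 - Real.log η2) / x) atTop (𝓝 0) := by
        simpa using h2
      refine h2'.congr fun x => ?_
      rw [← add_div]
      ring_nf
    have h4 := (h3.comp hs_top).const_mul (-2 * η2)
    simpa [Function.comp, mul_div_assoc, neg_div, neg_mul, mul_zero] using h4
  -- nonnegativity
  have hb_nonneg : ∀ x ∈ Ioi (0 : ℝ), 0 ≤ 4 * x * η2 / (x ^ 2 + η2) ^ 2 := by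
    intro x hx
    have hx0 : (0 : ℝ) < x := hx
    positivity
  have hlog_diff : ∀ x : ℝ, 0 ≤ Real.log (x ^ 2 + η2) - Real.log η2 := fun x =>
    sub_nonneg.mpr (Real.log_le_log hη2 (le_add_of_nonneg_left (sq_nonneg x)))
  have hh2_nonneg : ∀ x ∈ Ioi (0 : ℝ),
      0 ≤ 4 * x * η2 * (Real.log (x ^ 2 + η2) - Real.log η2) / (x ^ 2 + η2) ^ 2 := by
    intro x hx
    have hx0 : (0 : ℝ) < x := hx
    have := hlog_diff x
    positivity
  -- integrability and values of the two pieces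
  have hb_int : IntegrableOn (fun r : ℝ => 4 * r * η2 / (r ^ 2 + η2) ^ 2) (Ioi 0) :=
    integrableOn_Ioi_deriv_of_nonneg' (fun x _ => hp x) hb_nonneg hp_lim
  have hb_val : ∫ r in Ioi (0 : ℝ), 4 * r * η2 / (r ^ 2 + η2) ^ 2 = 2 := by
    rw [integral_Ioi_of_hasDerivAt_of_nonneg' (fun x _ => hp x) hb_nonneg hp_lim]
    norm_num
    field_simp
  have hh2_int : IntegrableOn
      (fun r : ℝ => 4 * r * η2 * (Real.log (r ^ 2 + η2) - Real.log η2) / (r ^ 2 + η2) ^ 2)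
      (Ioi 0) :=
    integrableOn_Ioi_deriv_of_nonneg' (fun x _ => hq x) hh2_nonneg hq_lim
  have hh2_val : ∫ r in Ioi (0 : ℝ),
      4 * r * η2 * (Real.log (r ^ 2 + η2) - Real.log η2) / (r ^ 2 + η2) ^ 2 = 2 := by
    rw [integral_Ioi_of_hasDerivAt_of_nonneg' (fun x _ => hq x) hh2_nonneg hq_lim]
    norm_num
    field_simp
  -- pointwise upper bound for the log
  have key : ∀ r : ℝ, Real.log (r ^ 2 + ηs2)
      ≤ Real.log ηs2 + (Real.log (r ^ 2 + η2) - Real.log η2) := by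
    intro r
    have h1 : r ^ 2 + ηs2 ≤ ηs2 * (r ^ 2 + η2) / η2 := by
      rw [le_div_iff₀ hη2]
      nlinarith [sq_nonneg r]
    calc Real.log (r ^ 2 + ηs2) ≤ Real.log (ηs2 * (r ^ 2 + η2) / η2) :=
          Real.log_le_log (hpos' r) h1
      _ = Real.log ηs2 + (Real.log (r ^ 2 + η2) - Real.log η2) := by
          rw [Real.log_div (by positivity) hη2.ne', Real.log_mul hηs2.ne' (hpos r).ne']
          ring
  have keyl : ∀ r : ℝ, Real.log ηs2 ≤ Real.log (r ^ 2 + ηs2) := fun r =>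
    Real.log_le_log hηs2 (le_add_of_nonneg_left (sq_nonneg r))
  -- integrability of the original integrand
  have hf_meas : AEStronglyMeasurable
      (fun r : ℝ => 4 * r * η2 * Real.log (r ^ 2 + ηs2) / (r ^ 2 + η2) ^ 2)
      (volume.restrict (Ioi 0)) := by
    apply Continuous.aestronglyMeasurable
    have hc1 : Continuous fun r : ℝ => Real.log (r ^ 2 + ηs2) :=
      Continuous.log (by continuity) fun r => (hpos' r).ne'
    exact (((by continuity : Continuous fun r : ℝ => 4 * r * η2).mul hc1).div
      (by continuity) fun r => pow_ne_zero 2 (hpos r).ne')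
  have hmaj_int : Integrable
      (fun r : ℝ => |Real.log ηs2| * (4 * r * η2 / (r ^ 2 + η2) ^ 2)
        + 4 * r * η2 * (Real.log (r ^ 2 + η2) - Real.log η2) / (r ^ 2 + η2) ^ 2)
      (volume.restrict (Ioi 0)) := (hb_int.const_mul _).add hh2_int
  have hf_int : IntegrableOn
      (fun r : ℝ => 4 * r * η2 * Real.log (r ^ 2 + ηs2) / (r ^ 2 + η2) ^ 2) (Ioi 0) := by
    refine hmaj_int.mono hf_meas ?_
    rw [ae_restrict_iff' measurableSet_Ioi]
    filter_upwards with r hr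
    have hc : 0 ≤ 4 * r * η2 / (r ^ 2 + η2) ^ 2 := hb_nonneg r hr
    have hL : |Real.log (r ^ 2 + ηs2)|
        ≤ |Real.log ηs2| + (Real.log (r ^ 2 + η2) - Real.log η2) := by
      rw [abs_le]
      constructor
      · have h1 := keyl r
        have h2 := neg_abs_le (Real.log ηs2)
        have h3 := hlog_diff r
        linarith
      · have h1 := key r
        have h2 := le_abs_self (Real.log ηs2)
        linarith
    have heq : |4 * r * η2 * Real.log (r ^ 2 + ηs2) / (r ^ 2 + η2) ^ 2|
        = (4 * r * η2 / (r ^ 2 + η2) ^ 2) * |Real.log (r ^ 2 + ηs2)| := by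
      rw [show (4 * r * η2 * Real.log (r ^ 2 + ηs2) / (r ^ 2 + η2) ^ 2)
        = (4 * r * η2 / (r ^ 2 + η2) ^ 2) * Real.log (r ^ 2 + ηs2) by ring,
        abs_mul, abs_of_nonneg hc]
    have hmajr : (4 * r * η2 / (r ^ 2 + η2) ^ 2) * |Real.log (r ^ 2 + ηs2)|
        ≤ |Real.log ηs2| * (4 * r * η2 / (r ^ 2 + η2) ^ 2)
          + 4 * r * η2 * (Real.log (r ^ 2 + η2) - Real.log η2) / (r ^ 2 + η2) ^ 2 := by
      calc (4 * r * η2 / (r ^ 2 + η2) ^ 2) * |Real.log (r ^ 2 + ηs2)|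
          ≤ (4 * r * η2 / (r ^ 2 + η2) ^ 2)
            * (|Real.log ηs2| + (Real.log (r ^ 2 + η2) - Real.log η2)) :=
            mul_le_mul_of_nonneg_left hL hc
        _ = |Real.log ηs2| * (4 * r * η2 / (r ^ 2 + η2) ^ 2)
            + 4 * r * η2 * (Real.log (r ^ 2 + η2) - Real.log η2) / (r ^ 2 + η2) ^ 2 := by ring
    rw [Real.norm_eq_abs, Real.norm_eq_abs, heq]
    exact hmajr.trans (le_abs_self _)
  -- comparison of integrals
  have hg_int : Integrable
      (fun r : ℝ => Real.log ηs2 * (4 * r * η2 / (r ^ 2 + η2) ^ 2)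
        + 4 * r * η2 * (Real.log (r ^ 2 + η2) - Real.log η2) / (r ^ 2 + η2) ^ 2)
      (volume.restrict (Ioi 0)) := (hb_int.const_mul _).add hh2_int
  have hmono : ∫ r in Ioi (0 : ℝ), 4 * r * η2 * Real.log (r ^ 2 + ηs2) / (r ^ 2 + η2) ^ 2
      ≤ ∫ r in Ioi (0 : ℝ), (Real.log ηs2 * (4 * r * η2 / (r ^ 2 + η2) ^ 2)
        + 4 * r * η2 * (Real.log (r ^ 2 + η2) - Real.log η2) / (r ^ 2 + η2) ^ 2) := by
    refine setIntegral_mono_on hf_int hg_int measurableSet_Ioi ?_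
    intro r hr
    have hc : 0 ≤ 4 * r * η2 / (r ^ 2 + η2) ^ 2 := hb_nonneg r hr
    calc 4 * r * η2 * Real.log (r ^ 2 + ηs2) / (r ^ 2 + η2) ^ 2
        = (4 * r * η2 / (r ^ 2 + η2) ^ 2) * Real.log (r ^ 2 + ηs2) := by ring
      _ ≤ (4 * r * η2 / (r ^ 2 + η2) ^ 2)
          * (Real.log ηs2 + (Real.log (r ^ 2 + η2) - Real.log η2)) :=
          mul_le_mul_of_nonneg_left (key r) hc
      _ = Real.log ηs2 * (4 * r * η2 / (r ^ 2 + η2) ^ 2)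
          + 4 * r * η2 * (Real.log (r ^ 2 + η2) - Real.log η2) / (r ^ 2 + η2) ^ 2 := by ring
  have hval : ∫ r in Ioi (0 : ℝ), (Real.log ηs2 * (4 * r * η2 / (r ^ 2 + η2) ^ 2)
      + 4 * r * η2 * (Real.log (r ^ 2 + η2) - Real.log η2) / (r ^ 2 + η2) ^ 2)
      = 2 * Real.log ηs2 + 2 := by
    rw [integral_add (hb_int.const_mul _) hh2_int, MeasureTheory.integral_const_mul, hb_val, hh2_val]
    ring
  linarith [hmono, hval.le]
end

section
/- Let η² > 0 and let 0 < η*² < η² be reals. Then ∫₀^∞ 4r·η²·log(r² + η*²)/(r² + η²)² dr ≤ 2·log(η*²) + 2·η²/η*². -/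
open MeasureTheory Real Filter Topology Set

theorem stmt_7 (η2 ηs2 : ℝ) (hηs2 : 0 < ηs2) (h : ηs2 < η2) :
    ∫ r in Set.Ioi (0 : ℝ), 4 * r * η2 * Real.log (r ^ 2 + ηs2) / (r ^ 2 + η2) ^ 2
      ≤ 2 * Real.log ηs2 + 2 * η2 / ηs2 := by
  have hη2 : 0 < η2 := hηs2.trans h
  set c := Real.log ηs2 with hc
  have hne : ∀ r : ℝ, r ^ 2 + η2 ≠ 0 := fun r => by positivity
  set p : ℝ → ℝ := fun r => 4 * r * η2 / (r ^ 2 + η2) ^ 2 with hp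
  set F : ℝ → ℝ := fun r => 4 * r * η2 * (Real.log (r ^ 2 + η2) - c) / (r ^ 2 + η2) ^ 2 with hF
  set q : ℝ → ℝ := fun r => 4 * r * η2 * (Real.log (r ^ 2 + ηs2) - c) / (r ^ 2 + η2) ^ 2 with hq
  have hu : ∀ r : ℝ, HasDerivAt (fun r : ℝ => r ^ 2 + η2) (2 * r) r := by
    intro r
    simpa using (hasDerivAt_pow 2 r).add_const η2
  -- antiderivative of p
  have hP : ∀ r : ℝ, HasDerivAt (fun r : ℝ => -2 * η2 / (r ^ 2 + η2)) (p r) r := by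
    intro r
    have := (hasDerivAt_const r (-2 * η2)).div (hu r) (hne r)
    refine this.congr_deriv ?_
    simp only [hp]
    field_simp
    ring
  -- antiderivative of F
  have hG : ∀ r : ℝ, HasDerivAt
      (fun r : ℝ => 2 * η2 * (c - 1 - Real.log (r ^ 2 + η2)) / (r ^ 2 + η2)) (F r) r := by
    intro r
    have hl : HasDerivAt (fun r : ℝ => Real.log (r ^ 2 + η2)) (2 * r / (r ^ 2 + η2)) r :=
      (hu r).log (hne r)
    have hnum : HasDerivAt (fun r : ℝ => 2 * η2 * (c - 1 - Real.log (r ^ 2 + η2)))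
        (2 * η2 * (0 - 2 * r / (r ^ 2 + η2))) r :=
      (((hasDerivAt_const r (c - 1)).sub hl)).const_mul (2 * η2)
    have := hnum.div (hu r) (hne r)
    refine this.congr_deriv ?_
    simp only [hF]
    field_simp
    ring
  have htop : Tendsto (fun r : ℝ => r ^ 2 + η2) atTop atTop :=
    tendsto_atTop_add_const_right _ _ (tendsto_pow_atTop two_ne_zero)
  have hPtop : Tendsto (fun r : ℝ => -2 * η2 / (r ^ 2 + η2)) atTop (𝓝 0) := by
    have := (tendsto_inv_atTop_zero.comp htop).const_mul (-2 * η2)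
    simpa [div_eq_mul_inv, Function.comp] using this
  have hGtop : Tendsto (fun r : ℝ => 2 * η2 * (c - 1 - Real.log (r ^ 2 + η2)) / (r ^ 2 + η2))
      atTop (𝓝 0) := by
    have h1 : Tendsto (fun x : ℝ => Real.log x / x) atTop (𝓝 0) :=
      Real.isLittleO_log_id_atTop.tendsto_div_nhds_zero
    have h2 : Tendsto (fun r : ℝ => Real.log (r ^ 2 + η2) / (r ^ 2 + η2)) atTop (𝓝 0) :=
      h1.comp htop
    have h3 : Tendsto (fun r : ℝ => (2 * η2 * (c - 1)) / (r ^ 2 + η2)) atTop (𝓝 0) := by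
      have := (tendsto_inv_atTop_zero.comp htop).const_mul (2 * η2 * (c - 1))
      simpa [div_eq_mul_inv, Function.comp] using this
    have h4 := h3.sub (h2.const_mul (2 * η2))
    rw [show (0:ℝ) - 2 * η2 * 0 = 0 by ring] at h4
    exact h4.congr fun r => by ring
  have hPcont : ContinuousWithinAt (fun r : ℝ => -2 * η2 / (r ^ 2 + η2)) (Ici 0) 0 :=
    ((hP 0).continuousAt).continuousWithinAt
  have hGcont : ContinuousWithinAt
      (fun r : ℝ => 2 * η2 * (c - 1 - Real.log (r ^ 2 + η2)) / (r ^ 2 + η2)) (Ici 0) 0 :=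
    ((hG 0).continuousAt).continuousWithinAt
  have hpnn : ∀ r ∈ Ioi (0:ℝ), 0 ≤ p r := by
    intro r hr
    have : (0:ℝ) < r := hr
    positivity
  have hFnn : ∀ r ∈ Ioi (0:ℝ), 0 ≤ F r := by
    intro r hr
    have hr' : (0:ℝ) < r := hr
    have : c ≤ Real.log (r ^ 2 + η2) := by
      rw [hc]
      apply Real.log_le_log hηs2
      nlinarith
    have h1 : 0 ≤ Real.log (r ^ 2 + η2) - c := by linarith
    simp only [hF]
    positivity
  have hpint : IntegrableOn p (Ioi 0) :=
    integrableOn_Ioi_deriv_of_nonneg hPcont (fun x hx => hP x) hpnn hPtop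
  have hFint : IntegrableOn F (Ioi 0) :=
    integrableOn_Ioi_deriv_of_nonneg hGcont (fun x hx => hG x) hFnn hGtop
  have hpval : ∫ r in Ioi (0:ℝ), p r = 2 := by
    rw [integral_Ioi_of_hasDerivAt_of_nonneg hPcont (fun x hx => hP x) hpnn hPtop]
    field_simp
    ring
  have hFval : ∫ r in Ioi (0:ℝ), F r = 2 * (1 + Real.log η2 - c) := by
    rw [integral_Ioi_of_hasDerivAt_of_nonneg hGcont (fun x hx => hG x) hFnn hGtop]
    field_simp
    ring
  -- q ≤ F on Ioi 0 and q nonneg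
  have hqF : ∀ r ∈ Ioi (0:ℝ), q r ≤ F r := by
    intro r hr
    have hr' : (0:ℝ) < r := hr
    have hlog : Real.log (r ^ 2 + ηs2) ≤ Real.log (r ^ 2 + η2) :=
      Real.log_le_log (by positivity) (by linarith)
    simp only [hq, hF]
    gcongr
  have hqnn : ∀ r ∈ Ioi (0:ℝ), 0 ≤ q r := by
    intro r hr
    have hr' : (0:ℝ) < r := hr
    have : c ≤ Real.log (r ^ 2 + ηs2) := by
      rw [hc]
      apply Real.log_le_log hηs2
      nlinarith
    have h1 : 0 ≤ Real.log (r ^ 2 + ηs2) - c := by linarith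
    simp only [hq]
    positivity
  have hqmeas : AEStronglyMeasurable q (volume.restrict (Ioi (0:ℝ))) := by
    apply Measurable.aestronglyMeasurable
    have m1 : Measurable fun r : ℝ => Real.log (r ^ 2 + ηs2) :=
      Real.measurable_log.comp ((measurable_id.pow_const 2).add_const ηs2)
    simp only [hq]
    exact (((measurable_id.const_mul 4).mul_const η2).mul (m1.sub measurable_const)).div
      (((measurable_id.pow_const 2).add_const η2).pow_const 2)
  have hqint : IntegrableOn q (Ioi 0) := by
    apply hFint.mono' hqmeas
    rw [ae_restrict_iff' measurableSet_Ioi]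
    filter_upwards with r hr
    rw [Real.norm_eq_abs, abs_of_nonneg (hqnn r hr)]
    exact hqF r hr
  -- split the integral
  have hsplit : (fun r : ℝ => 4 * r * η2 * Real.log (r ^ 2 + ηs2) / (r ^ 2 + η2) ^ 2)
      = fun r => q r + c * p r := by
    funext r
    simp only [hq, hp]
    ring
  rw [hsplit, integral_add hqint (hpint.const_mul c)]
  simp only [MeasureTheory.integral_const_mul]
  rw [hpval]
  have hqle : ∫ r in Ioi (0:ℝ), q r ≤ 2 * (1 + Real.log η2 - c) := by
    rw [← hFval]
    exact setIntegral_mono_on hqint hFint measurableSet_Ioi hqF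
  have hlast : 2 * (1 + Real.log η2 - c) ≤ 2 * η2 / ηs2 := by
    have hlog : Real.log (η2 / ηs2) ≤ η2 / ηs2 - 1 :=
      Real.log_le_sub_one_of_pos (by positivity)
    rw [Real.log_div (ne_of_gt hη2) (ne_of_gt hηs2)] at hlog
    rw [hc, mul_div_assoc]
    linarith
  linarith
end
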